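/- arXiv:0709.1490 — 6 statements merged into one kernel-verified Lean document; each statement's English description precedes it below -/
import Mathlib

section
/- Let w : ℝⁿ → ℝ be a convex function attaining its minimum m = w(x₀) at a point x₀, and let R' > 0 be such that w(x) ≥ m + 1 for all x with ‖x − x₀‖ = R'. Then for every x with ‖x − x₀‖ ≥ R' at which w is differentiable, one has ‖∇w(x)‖ ≥ 1/R'. -/
/-- Gradient lower bound for a convex function outside a ball around its minimum point:
if `w` is convex with minimum `m = w(x₀)` and `w ≥ m + 1` on the sphere of radius `R'`
about `x₀`, then `‖∇w(x)‖ ≥ 1/R'` at every point `x` with `‖x − x₀‖ ≥ R'` where `w`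
is differentiable. -/
theorem convex_gradient_lower_bound (n : ℕ) (w : EuclideanSpace ℝ (Fin n) → ℝ)
    (hconv : ConvexOn ℝ Set.univ w) (x₀ : EuclideanSpace ℝ (Fin n))
    (hmin : ∀ x, w x₀ ≤ w x) (R' : ℝ) (hR' : 0 < R')
    (hsphere : ∀ x, ‖x - x₀‖ = R' → w x₀ + 1 ≤ w x) :
    ∀ x, R' ≤ ‖x - x₀‖ → DifferentiableAt ℝ w x → 1 / R' ≤ ‖gradient w x‖ := by
  intro x hxR hdiff
  set v : EuclideanSpace ℝ (Fin n) := x - x₀ with hv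
  have hr0 : 0 < ‖v‖ := lt_of_lt_of_le hR' hxR
  set t₀ : ℝ := R' / ‖v‖ with ht₀
  have ht₀pos : 0 < t₀ := div_pos hR' hr0
  have ht₀le : t₀ ≤ 1 := (div_le_one hr0).2 hxR
  have hy : ‖(x₀ + t₀ • v) - x₀‖ = R' := by
    rw [add_sub_cancel_left, norm_smul, Real.norm_eq_abs, abs_of_pos ht₀pos, ht₀]
    exact div_mul_cancel₀ R' hr0.ne'
  -- lower bound on w x - w x₀
  have hsub : ‖v‖ / R' ≤ w x - w x₀ := by
    have hy' := hsphere _ hy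
    have hconvseg := hconv.2 (Set.mem_univ x₀) (Set.mem_univ x)
      (by linarith : (0:ℝ) ≤ 1 - t₀) ht₀pos.le (by ring : 1 - t₀ + t₀ = 1)
    have hpt : (1 - t₀) • x₀ + t₀ • x = x₀ + t₀ • v := by
      simp only [hv, smul_sub]; module
    rw [hpt] at hconvseg
    have h1 : 1 ≤ t₀ * (w x - w x₀) := by
      have := hy'.trans hconvseg
      simp only [smul_eq_mul] at this
      nlinarith
    rw [ht₀, div_mul_eq_mul_div, le_div_iff₀ hr0, one_mul] at h1
    rw [div_le_iff₀ hR']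
    nlinarith
  -- the derivative of w along the line through x₀ and x, at the point x
  have hcurve : HasDerivAt (fun t : ℝ => x₀ + t • v) v 1 := by
    have h : HasDerivAt (fun t : ℝ => t • v) ((1 : ℝ) • v) 1 :=
      (hasDerivAt_id (1 : ℝ)).smul_const v
    simpa using h.const_add x₀
  have hfd : HasFDerivAt w (InnerProductSpace.toDual ℝ _ (gradient w x)) x :=
    hdiff.hasGradientAt
  have hx1 : x₀ + (1 : ℝ) • v = x := by simp [hv]
  have hfd' : HasFDerivAt w (InnerProductSpace.toDual ℝ _ (gradient w x))
      ((fun t : ℝ => x₀ + t • v) 1) := by simpa [hv] using hfd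
  have hgd : HasDerivAt (fun t : ℝ => w (x₀ + t • v))
      (inner ℝ (gradient w x) v : ℝ) 1 := by
    have h := hfd'.comp_hasDerivAt (1 : ℝ) hcurve
    rw [InnerProductSpace.toDual_apply_apply] at h
    exact h
  -- convexity of the restriction to the line
  have hgconv : ConvexOn ℝ Set.univ (fun t : ℝ => w (x₀ + t • v)) := by
    have h := hconv.comp_affineMap (AffineMap.lineMap x₀ x)
    have heq : (w ∘ AffineMap.lineMap x₀ x) = fun t : ℝ => w (x₀ + t • v) := by
      funext t
      simp [AffineMap.lineMap_apply, hv]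
      congr 1
      abel
    have hpre : (AffineMap.lineMap x₀ x : ℝ →ᵃ[ℝ] _) ⁻¹' Set.univ = Set.univ :=
      Set.preimage_univ
    rw [heq, hpre] at h
    exact h
  -- slope inequality
  have hslope := hgconv.slope_le_of_hasDerivAt (Set.mem_univ (0 : ℝ))
    (Set.mem_univ (1 : ℝ)) one_pos hgd
  have hslope' : w x - w x₀ ≤ (inner ℝ (gradient w x) v : ℝ) := by
    have : slope (fun t : ℝ => w (x₀ + t • v)) 0 1 = w x - w x₀ := by
      rw [slope_def_field]
      simp [hv]
    rwa [this] at hslope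
  have hcs : (inner ℝ (gradient w x) v : ℝ) ≤ ‖gradient w x‖ * ‖v‖ :=
    real_inner_le_norm _ _
  have hfinal : ‖v‖ / R' ≤ ‖gradient w x‖ * ‖v‖ := le_trans hsub (hslope'.trans hcs)
  rw [div_le_iff₀ hR'] at hfinal ⊢
  nlinarith
end

section
/- Let w : ℝⁿ → ℝ be a convex function attaining its minimum m = w(x₀) at a point x₀, and let R' > 0 be such that w(x) ≥ m + 1 for all x with ‖x − x₀‖ = R'. Then for every R ≥ R' one has ∫_{{x : ‖x − x₀‖ ≥ R}} exp(−w(x)) dx ≤ exp(−m) · ∫_{{y : ‖y‖ ≥ R}} exp(−‖y‖/R') dy; in particular, for every ε > 0 there is R_ε depending only on n, R' and a lower bound for m such that ∫_{{x : ‖x − x₀‖ ≥ R_ε}} exp(−w(x)) dx < ε. -/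
open MeasureTheory

private lemma aux_convex_bound {n : ℕ} {R' : ℝ} (hR' : 0 < R')
    (w : EuclideanSpace ℝ (Fin n) → ℝ) (x₀ : EuclideanSpace ℝ (Fin n))
    (hconv : ConvexOn ℝ Set.univ w)
    (hsph : ∀ x, ‖x - x₀‖ = R' → w x₀ + 1 ≤ w x)
    {x : EuclideanSpace ℝ (Fin n)} (hx : R' ≤ ‖x - x₀‖) :
    w x₀ + ‖x - x₀‖ / R' ≤ w x := by
  set r := ‖x - x₀‖ with hr
  have hr0 : 0 < r := lt_of_lt_of_le hR' hx
  set t := R' / r with ht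
  have ht0 : 0 < t := div_pos hR' hr0
  have ht1 : t ≤ 1 := (div_le_one hr0).2 hx
  set y := (1 - t) • x₀ + t • x with hy
  have hyn : ‖y - x₀‖ = R' := by
    have h1 : y - x₀ = t • (x - x₀) := by
      rw [hy]; module
    rw [h1, norm_smul, Real.norm_eq_abs, abs_of_pos ht0, ← hr, ht]
    field_simp
  have h1 := hsph y hyn
  have h2 := hconv.2 (Set.mem_univ x₀) (Set.mem_univ x) (by linarith : (0:ℝ) ≤ 1 - t)
    ht0.le (by ring)
  rw [← hy] at h2
  simp only [smul_eq_mul] at h2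
  have htr : t * (r / R') = 1 := by
    rw [ht]; field_simp
  have h4 : t * (r / R') ≤ t * (w x - w x₀) := by nlinarith [h1, h2]
  have h5 := (mul_le_mul_iff_right₀ ht0).1 h4
  linarith

private lemma aux_integrable (n : ℕ) {R' : ℝ} (hR' : 0 < R') :
    Integrable (fun y : EuclideanSpace ℝ (Fin n) => Real.exp (-(‖y‖ / R'))) := by
  have hnr : (Module.finrank ℝ (EuclideanSpace ℝ (Fin n)) : ℝ) < ((n : ℝ) + 1) := by
    rw [finrank_euclideanSpace_fin]; linarith
  have hint := integrable_one_add_norm (E := EuclideanSpace ℝ (Fin n)) (μ := volume) hnr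
  set C : ℝ := (Nat.factorial (n + 1) : ℝ) * R' ^ (n + 1) * Real.exp (1 / R') with hC
  refine (hint.const_mul C).mono' ?_ ?_
  · exact Continuous.aestronglyMeasurable (by fun_prop)
  · filter_upwards with y
    set t := ‖y‖ with htdef
    have ht : 0 ≤ t := norm_nonneg _
    have hpow : (0:ℝ) < (1 + t) ^ (n + 1) := by positivity
    have key : (1 + t) ^ (n + 1) ≤ C * Real.exp (t / R') := by
      have h1 : ((1 + t) / R') ^ (n + 1) / (Nat.factorial (n + 1) : ℝ)
          ≤ Real.exp ((1 + t) / R') :=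
        Real.pow_div_factorial_le_exp _ (by positivity) (n + 1)
      have h2 : Real.exp ((1 + t) / R') = Real.exp (1 / R') * Real.exp (t / R') := by
        rw [← Real.exp_add, ← add_div]
      have h3 : ((1 + t) / R') ^ (n + 1) = (1 + t) ^ (n + 1) / R' ^ (n + 1) := by
        rw [div_pow]
      rw [h2, h3] at h1
      have hfac : (0:ℝ) < (Nat.factorial (n + 1) : ℝ) := by positivity
      have hRp : (0:ℝ) < R' ^ (n + 1) := by positivity
      calc (1 + t) ^ (n + 1)
          = ((1 + t) ^ (n + 1) / R' ^ (n + 1) / (Nat.factorial (n + 1) : ℝ))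
              * ((Nat.factorial (n + 1) : ℝ) * R' ^ (n + 1)) := by field_simp
        _ ≤ (Real.exp (1 / R') * Real.exp (t / R'))
              * ((Nat.factorial (n + 1) : ℝ) * R' ^ (n + 1)) := by
            apply mul_le_mul_of_nonneg_right h1 (by positivity)
        _ = C * Real.exp (t / R') := by rw [hC]; ring
    have hrpow : (1 + ‖y‖) ^ (-((n : ℝ) + 1)) = ((1 + t) ^ (n + 1) : ℝ)⁻¹ := by
      rw [← htdef, ← Real.rpow_natCast (1 + t) (n + 1), ← Real.rpow_neg (by positivity)]
      norm_num
    rw [Real.norm_eq_abs, abs_of_pos (Real.exp_pos _), hrpow, ← div_eq_mul_inv,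
      le_div_iff₀ hpow]
    calc Real.exp (-(t / R')) * (1 + t) ^ (n + 1)
        ≤ Real.exp (-(t / R')) * (C * Real.exp (t / R')) := by
          apply mul_le_mul_of_nonneg_left key (Real.exp_pos _).le
      _ = C * (Real.exp (-(t / R')) * Real.exp (t / R')) := by ring
      _ = C := by simp [← Real.exp_add]

private lemma aux_translate {n : ℕ} (x₀ : EuclideanSpace ℝ (Fin n)) (R : ℝ)
    (g : EuclideanSpace ℝ (Fin n) → ℝ) :
    ∫ x in {x : EuclideanSpace ℝ (Fin n) | R ≤ ‖x - x₀‖}, g (x - x₀)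
      = ∫ y in {y : EuclideanSpace ℝ (Fin n) | R ≤ ‖y‖}, g y := by
  have hmeas : MeasurableSet {y : EuclideanSpace ℝ (Fin n) | R ≤ ‖y‖} :=
    (isClosed_le continuous_const continuous_norm).measurableSet
  have hmeas' : MeasurableSet {x : EuclideanSpace ℝ (Fin n) | R ≤ ‖x - x₀‖} :=
    (isClosed_le continuous_const
      (continuous_norm.comp (continuous_id.sub continuous_const))).measurableSet
  rw [← integral_indicator hmeas', ← integral_indicator hmeas,
    ← integral_sub_right_eq_self
      (fun x => Set.indicator {y : EuclideanSpace ℝ (Fin n) | R ≤ ‖y‖} g x) x₀]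
  congr 1

private lemma aux_main {n : ℕ} {R' : ℝ} (hR' : 0 < R')
    (w : EuclideanSpace ℝ (Fin n) → ℝ) (x₀ : EuclideanSpace ℝ (Fin n))
    (hconv : ConvexOn ℝ Set.univ w)
    (hsph : ∀ x, ‖x - x₀‖ = R' → w x₀ + 1 ≤ w x)
    (R : ℝ) (hR : R' ≤ R) :
    (∫ x in {x : EuclideanSpace ℝ (Fin n) | R ≤ ‖x - x₀‖}, Real.exp (-(w x)))
      ≤ Real.exp (-(w x₀)) *
        ∫ y in {y : EuclideanSpace ℝ (Fin n) | R ≤ ‖y‖}, Real.exp (-(‖y‖ / R')) := by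
  set S := {x : EuclideanSpace ℝ (Fin n) | R ≤ ‖x - x₀‖} with hSdef
  have hS : MeasurableSet S :=
    (isClosed_le continuous_const
      (continuous_norm.comp (continuous_id.sub continuous_const))).measurableSet
  have hw_cont : Continuous w := by
    have := hconv.continuousOn isOpen_univ
    rwa [continuousOn_univ] at this
  have hgint : Integrable (fun y : EuclideanSpace ℝ (Fin n) => Real.exp (-(‖y‖ / R'))) :=
    aux_integrable n hR'
  have hgx : Integrable (fun x : EuclideanSpace ℝ (Fin n) =>
      Real.exp (-(w x₀)) * Real.exp (-(‖x - x₀‖ / R'))) := by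
    have h1 : MeasurePreserving (fun x : EuclideanSpace ℝ (Fin n) => x - x₀) volume volume :=
      measurePreserving_sub_right volume x₀
    exact ((h1.integrable_comp hgint.aestronglyMeasurable).2 hgint).const_mul _
  have hmono : ∀ x ∈ S, Real.exp (-(w x))
      ≤ Real.exp (-(w x₀)) * Real.exp (-(‖x - x₀‖ / R')) := by
    intro x hx
    have hb := aux_convex_bound hR' w x₀ hconv hsph (le_trans hR hx)
    rw [← Real.exp_add]
    exact Real.exp_le_exp.2 (by linarith)
  have hfint : IntegrableOn (fun x => Real.exp (-(w x))) S := by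
    refine hgx.integrableOn.mono' ?_ ?_
    · exact (Continuous.aestronglyMeasurable (by fun_prop)).restrict
    · refine (ae_restrict_iff' hS).2 (Filter.Eventually.of_forall fun x hx => ?_)
      rw [Real.norm_eq_abs, abs_of_pos (Real.exp_pos _)]
      exact hmono x hx
  calc (∫ x in S, Real.exp (-(w x)))
      ≤ ∫ x in S, Real.exp (-(w x₀)) * Real.exp (-(‖x - x₀‖ / R')) :=
        setIntegral_mono_on hfint hgx.integrableOn hS hmono
    _ = Real.exp (-(w x₀)) * ∫ x in S, Real.exp (-(‖x - x₀‖ / R')) := by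
        rw [MeasureTheory.integral_const_mul]
    _ = Real.exp (-(w x₀)) *
          ∫ y in {y : EuclideanSpace ℝ (Fin n) | R ≤ ‖y‖}, Real.exp (-(‖y‖ / R')) := by
        rw [aux_translate x₀ R (fun y => Real.exp (-(‖y‖ / R')))]

/-- Uniform exponential tail estimate for `e^{−w}` outside large balls, for a convex
function `w` with minimum `m = w(x₀)` which is `≥ m + 1` on the sphere of radius `R'`
about `x₀`: for every `R ≥ R'`,
`∫_{‖x−x₀‖≥R} e^{−w} ≤ e^{−m} ∫_{‖y‖≥R} e^{−‖y‖/R'} dy`, and for every `ε > 0` there is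
`R_ε` depending only on `n`, `R'` and a lower bound `m₀` for `m` such that the tail
integral over `‖x − x₀‖ ≥ R_ε` is `< ε`. -/
theorem convex_tail_estimate (n : ℕ) (R' : ℝ) (hR' : 0 < R') :
    (∀ (w : EuclideanSpace ℝ (Fin n) → ℝ) (x₀ : EuclideanSpace ℝ (Fin n)),
      ConvexOn ℝ Set.univ w → (∀ x, w x₀ ≤ w x) →
      (∀ x, ‖x - x₀‖ = R' → w x₀ + 1 ≤ w x) →
      ∀ R : ℝ, R' ≤ R →
        (∫ x in {x : EuclideanSpace ℝ (Fin n) | R ≤ ‖x - x₀‖}, Real.exp (-(w x)))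
          ≤ Real.exp (-(w x₀)) *
            ∫ y in {y : EuclideanSpace ℝ (Fin n) | R ≤ ‖y‖}, Real.exp (-(‖y‖ / R'))) ∧
    (∀ ε : ℝ, 0 < ε → ∀ m₀ : ℝ, ∃ Rε : ℝ, 0 < Rε ∧
      ∀ (w : EuclideanSpace ℝ (Fin n) → ℝ) (x₀ : EuclideanSpace ℝ (Fin n)),
        ConvexOn ℝ Set.univ w → (∀ x, w x₀ ≤ w x) →
        (∀ x, ‖x - x₀‖ = R' → w x₀ + 1 ≤ w x) → m₀ ≤ w x₀ →
        (∫ x in {x : EuclideanSpace ℝ (Fin n) | Rε ≤ ‖x - x₀‖}, Real.exp (-(w x))) < ε) := by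
  constructor
  · intro w x₀ hconv _hmin hsph R hR
    exact aux_main hR' w x₀ hconv hsph R hR
  · intro ε hε m₀
    set g := fun y : EuclideanSpace ℝ (Fin n) => Real.exp (-(‖y‖ / R')) with hg
    have hgint : Integrable g := aux_integrable n hR'
    have hmeas : ∀ R : ℝ, MeasurableSet {y : EuclideanSpace ℝ (Fin n) | R ≤ ‖y‖} :=
      fun R => (isClosed_le continuous_const continuous_norm).measurableSet
    have htend : Filter.Tendsto
        (fun k : ℕ => ∫ y in {y : EuclideanSpace ℝ (Fin n) | (k : ℝ) ≤ ‖y‖}, g y)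
        Filter.atTop (nhds 0) := by
      have h0 : (0 : ℝ) = ∫ _y : EuclideanSpace ℝ (Fin n), (0 : ℝ) := by simp
      have := tendsto_integral_of_dominated_convergence
        (F := fun (k : ℕ) (y : EuclideanSpace ℝ (Fin n)) =>
          Set.indicator {y : EuclideanSpace ℝ (Fin n) | (k : ℝ) ≤ ‖y‖} g y)
        (f := fun _ => (0 : ℝ)) (bound := g)
        (fun k => hgint.aestronglyMeasurable.indicator (hmeas k))
        hgint
        (fun k => Filter.Eventually.of_forall fun y => by
          by_cases h : (k : ℝ) ≤ ‖y‖ <;>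
            simp [Set.indicator, h, abs_of_pos (Real.exp_pos _), Real.exp_le_exp, hg,
              Real.exp_pos, (Real.exp_pos _).le])
        (Filter.Eventually.of_forall fun y => by
          have hz : (fun k : ℕ =>
              Set.indicator {y : EuclideanSpace ℝ (Fin n) | (k : ℝ) ≤ ‖y‖} g y)
              =ᶠ[Filter.atTop] (fun _ => (0 : ℝ)) := by
            filter_upwards [Filter.eventually_gt_atTop ⌈‖y‖⌉₊] with k hk
            have h2 : ¬ ((k : ℝ) ≤ ‖y‖) := by
              push_neg
              calc ‖y‖ ≤ (⌈‖y‖⌉₊ : ℝ) := Nat.le_ceil _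
                _ < (k : ℝ) := by exact_mod_cast hk
            simp [Set.indicator, h2]
          exact tendsto_const_nhds.congr' hz.symm)
      simp only [integral_zero] at this
      convert this using 2 with k
      rw [integral_indicator (hmeas k)]
    have htend2 : Filter.Tendsto
        (fun k : ℕ => Real.exp (-m₀) *
          ∫ y in {y : EuclideanSpace ℝ (Fin n) | (k : ℝ) ≤ ‖y‖}, g y)
        Filter.atTop (nhds 0) := by
      simpa using htend.const_mul (Real.exp (-m₀))
    have hev : ∀ᶠ k : ℕ in Filter.atTop,
        Real.exp (-m₀) *
          (∫ y in {y : EuclideanSpace ℝ (Fin n) | (k : ℝ) ≤ ‖y‖}, g y) < ε :=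
      htend2.eventually_lt_const hε
    obtain ⟨k, hk1, hk2⟩ := (hev.and (Filter.eventually_ge_atTop ⌈R'⌉₊)).exists
    have hRk : R' ≤ (k : ℝ) := by
      calc R' ≤ (⌈R'⌉₊ : ℝ) := Nat.le_ceil _
        _ ≤ (k : ℝ) := by exact_mod_cast hk2
    refine ⟨(k : ℝ), lt_of_lt_of_le hR' hRk, ?_⟩
    intro w x₀ hconv hmin hsph hm₀
    calc (∫ x in {x : EuclideanSpace ℝ (Fin n) | (k : ℝ) ≤ ‖x - x₀‖}, Real.exp (-(w x)))
        ≤ Real.exp (-(w x₀)) *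
            ∫ y in {y : EuclideanSpace ℝ (Fin n) | (k : ℝ) ≤ ‖y‖}, Real.exp (-(‖y‖ / R')) :=
          aux_main hR' w x₀ hconv hsph (k : ℝ) hRk
      _ ≤ Real.exp (-m₀) *
            ∫ y in {y : EuclideanSpace ℝ (Fin n) | (k : ℝ) ≤ ‖y‖}, Real.exp (-(‖y‖ / R')) := by
          apply mul_le_mul_of_nonneg_right (Real.exp_le_exp.2 (neg_le_neg hm₀))
          exact setIntegral_nonneg (hmeas k) fun y _ => (Real.exp_pos _).le
      _ < ε := hk1
end

section
/- Let n ≥ 1 and let w : ℝⁿ → ℝ be a convex function that is Lipschitz with constant D > 0, attains its minimum m = w(x₀) at a point x₀, and satisfies ∫_{ℝⁿ} exp(−w(x)) dx ≤ K for some K > 0. Then there exists R' > 0, depending only on n, D, K and an upper bound for m (in particular independent of w itself beyond these data), such that w(x) ≥ m + 1 for every x with ‖x − x₀‖ ≥ R'. -/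
open MeasureTheory Metric

/-- Uniform localization of the sublevel set `{w ≤ m + 1}`: for `n ≥ 1` there is a
radius `R' > 0`, depending only on `n`, the Lipschitz constant `D`, the integral bound
`K` and an upper bound `m₁` for the minimum `m = w(x₀)`, such that every convex
`D`-Lipschitz function `w` with minimum `m ≤ m₁` attained at `x₀` and
`∫ e^{−w} ≤ K` satisfies `w(x) ≥ m + 1` for all `‖x − x₀‖ ≥ R'`. -/
theorem uniform_sublevel_localization (n : ℕ) (hn : 1 ≤ n) (D K m₁ : ℝ)
    (hD : 0 < D) (hK : 0 < K) :
    ∃ R' : ℝ, 0 < R' ∧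
      ∀ (w : EuclideanSpace ℝ (Fin n) → ℝ) (x₀ : EuclideanSpace ℝ (Fin n)),
        ConvexOn ℝ Set.univ w →
        (∀ x y, |w x - w y| ≤ D * ‖x - y‖) →
        (∀ x, w x₀ ≤ w x) →
        Integrable (fun x => Real.exp (-(w x))) volume →
        (∫ x, Real.exp (-(w x))) ≤ K →
        w x₀ ≤ m₁ →
        ∀ x, R' ≤ ‖x - x₀‖ → w x₀ + 1 ≤ w x := by
  have hρ : (0:ℝ) < 1 / D := by positivity
  set ρ : ℝ := 1 / D with hρdef
  set vball : ℝ := (volume (ball (0 : EuclideanSpace ℝ (Fin n)) ρ)).toReal with hv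
  have hvpos : 0 < vball := by
    rw [hv]
    exact ENNReal.toReal_pos (measure_ball_pos volume 0 hρ).ne' measure_ball_lt_top.ne
  set N : ℕ := ⌈K * Real.exp (m₁ + 2) / vball⌉₊ + 1 with hNdef
  have hNgt : K * Real.exp (m₁ + 2) / vball < N := by
    calc K * Real.exp (m₁ + 2) / vball ≤ ⌈K * Real.exp (m₁ + 2) / vball⌉₊ := Nat.le_ceil _
    _ < N := by exact_mod_cast Nat.lt_succ_self _
  have hNpos : 0 < (N : ℝ) := by positivity
  refine ⟨2 * ρ * N, by positivity, ?_⟩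
  intro w x₀ hconv hlip hmin hint hintK hm₁ x hx
  by_contra hcon
  push_neg at hcon
  have hwlt : w x ≤ w x₀ + 1 := hcon.le
  -- continuity of w
  have hwlip : LipschitzWith (Real.toNNReal D) w := by
    apply LipschitzWith.of_dist_le_mul
    intro a b
    simpa [Real.dist_eq, Real.coe_toNNReal _ hD.le, dist_eq_norm] using hlip a b
  have hwc : Continuous w := hwlip.continuous
  have hd : 0 < ‖x - x₀‖ := lt_of_lt_of_le (by positivity) hx
  set d : ℝ := ‖x - x₀‖ with hddef
  set c : ℕ → EuclideanSpace ℝ (Fin n) := fun k => x₀ + ((2 * ρ * k / d) • (x - x₀)) with hc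
  -- on the segment, w ≤ w x₀ + 1
  have hck : ∀ k ∈ Finset.range N, w (c k) ≤ w x₀ + 1 := by
    intro k hk
    have hkN : (k : ℝ) ≤ (N : ℝ) := by exact_mod_cast (Finset.mem_range.mp hk).le
    set t : ℝ := 2 * ρ * k / d with ht
    have ht0 : 0 ≤ t := by positivity
    have ht1 : t ≤ 1 := by
      rw [ht, div_le_one hd]
      calc 2 * ρ * k ≤ 2 * ρ * N := by nlinarith
      _ ≤ d := hx
    have hseg : c k = (1 - t) • x₀ + t • x := by
      rw [hc]
      simp only [smul_sub, sub_smul, one_smul]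
      abel
    have := hconv.2 (Set.mem_univ x₀) (Set.mem_univ x) (by linarith : 0 ≤ 1 - t) ht0
      (by ring : (1 - t) + t = 1)
    rw [← hseg] at this
    have hwx0 : w x₀ ≤ w x₀ + 1 := by linarith
    calc w (c k) ≤ (1 - t) * w x₀ + t * w x := this
    _ ≤ (1 - t) * (w x₀ + 1) + t * (w x₀ + 1) := by nlinarith
    _ = w x₀ + 1 := by ring
  -- on each ball, w ≤ m₁ + 2
  have hball : ∀ k ∈ Finset.range N, ∀ z ∈ ball (c k) ρ,
      Real.exp (-(m₁ + 2)) ≤ Real.exp (-(w z)) := by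
    intro k hk z hz
    have h1 : |w z - w (c k)| ≤ D * ‖z - c k‖ := hlip z (c k)
    have h2 : ‖z - c k‖ < ρ := by
      rw [← dist_eq_norm]; exact mem_ball.mp hz
    have h3 : D * ‖z - c k‖ ≤ 1 := by
      calc D * ‖z - c k‖ ≤ D * ρ := by nlinarith [norm_nonneg (z - c k)]
      _ = 1 := by rw [hρdef]; field_simp
    have h4 : w z ≤ m₁ + 2 := by
      have := abs_le.mp h1
      have := hck k hk
      linarith
    exact Real.exp_le_exp.mpr (by linarith)
  -- the balls are pairwise disjoint
  have hcdist : ∀ j k : ℕ, dist (c j) (c k) = 2 * ρ * |(j : ℝ) - k| := by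
    intro j k
    rw [dist_eq_norm, hc]
    have : (x₀ + (2 * ρ * j / d) • (x - x₀)) - (x₀ + (2 * ρ * k / d) • (x - x₀))
        = ((2 * ρ * j / d) - (2 * ρ * k / d)) • (x - x₀) := by
      rw [sub_smul]; abel
    rw [this, norm_smul, Real.norm_eq_abs, ← hddef]
    rw [div_sub_div_same, abs_div, abs_of_pos hd]
    rw [div_mul_eq_mul_div, mul_div_assoc, div_self hd.ne', mul_one]
    rw [show 2 * ρ * (j:ℝ) - 2 * ρ * k = 2 * ρ * ((j:ℝ) - k) by ring,
      abs_mul, abs_of_pos (by positivity : (0:ℝ) < 2 * ρ)]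
  have hdisj : (↑(Finset.range N) : Set ℕ).PairwiseDisjoint
      (fun k => ball (c k) ρ) := by
    intro j _ k _ hjk
    apply ball_disjoint_ball
    rw [hcdist j k]
    have : (1 : ℝ) ≤ |(j : ℝ) - k| := by
      have : (j : ℝ) ≠ k := by exact_mod_cast hjk
      have hne : (j : ℤ) ≠ k := by exact_mod_cast hjk
      have h1 : (1 : ℝ) ≤ |(j : ℤ) - (k : ℤ)| := by
        exact_mod_cast Int.one_le_abs (sub_ne_zero.mpr hne)
      push_cast at h1 ⊢
      exact h1
    nlinarith
  set U : Set (EuclideanSpace ℝ (Fin n)) := ⋃ k ∈ Finset.range N, ball (c k) ρ with hU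
  have hUmeas : MeasurableSet U := by
    apply MeasurableSet.biUnion (Finset.range N).countable_toSet
    intro k _
    exact measurableSet_ball
  have hvolU : volume U = N * volume (ball (0 : EuclideanSpace ℝ (Fin n)) ρ) := by
    rw [hU, measure_biUnion_finset hdisj (fun k _ => measurableSet_ball)]
    have : ∀ k ∈ Finset.range N, volume (ball (c k) ρ)
        = volume (ball (0 : EuclideanSpace ℝ (Fin n)) ρ) := fun k _ =>
      Measure.addHaar_ball_center volume (c k) ρ
    rw [Finset.sum_congr rfl this, Finset.sum_const, Finset.card_range, nsmul_eq_mul]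
  have hvolUfin : volume U < ⊤ := by
    rw [hvolU]
    exact ENNReal.mul_lt_top (by simp) measure_ball_lt_top
  have hvolUtoReal : (volume U).toReal = N * vball := by
    rw [hvolU, ENNReal.toReal_mul, hv]; simp
  -- integral lower bound
  have hineq1 : ∫ z in U, Real.exp (-(w z)) ≤ ∫ z, Real.exp (-(w z)) :=
    setIntegral_le_integral hint (Filter.Eventually.of_forall fun z => (Real.exp_pos _).le)
  have hineq2 : (volume U).toReal * Real.exp (-(m₁ + 2)) ≤ ∫ z in U, Real.exp (-(w z)) := by
    have hconst : ∫ z in U, Real.exp (-(m₁ + 2)) = (volume U).toReal * Real.exp (-(m₁ + 2)) := by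
      rw [setIntegral_const, smul_eq_mul, measureReal_def]
    rw [← hconst]
    apply setIntegral_mono_on
    · exact integrableOn_const hvolUfin.ne
    · exact hint.integrableOn
    · exact hUmeas
    · intro z hz
      rw [hU] at hz
      simp only [Set.mem_iUnion] at hz
      obtain ⟨k, hk, hzk⟩ := hz
      exact hball k hk z hzk
  have hfinal : (N : ℝ) * vball * Real.exp (-(m₁ + 2)) ≤ K := by
    rw [← hvolUtoReal]
    linarith
  -- contradiction with hNgt
  have hexp : Real.exp (-(m₁ + 2)) = (Real.exp (m₁ + 2))⁻¹ := Real.exp_neg _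
  have he : 0 < Real.exp (m₁ + 2) := Real.exp_pos _
  rw [hexp] at hfinal
  have : K * Real.exp (m₁ + 2) / vball < (N:ℝ) := hNgt
  have h1 : K * Real.exp (m₁ + 2) < (N:ℝ) * vball := by
    rwa [div_lt_iff₀ hvpos] at this
  have h2 : (N:ℝ) * vball ≤ K * Real.exp (m₁ + 2) := by
    have := mul_le_mul_of_nonneg_right hfinal he.le
    rwa [mul_assoc, inv_mul_cancel₀ he.ne', mul_one] at this
  linarith
end

section
/- Let n ≥ 1, let Ω ⊂ ℝⁿ be a bounded convex open set, let y₀ ∈ Ω and r > 0 with the open ball B(y₀, r) contained in Ω. Let w be continuous on the closure of Ω, convex and C² on Ω, and suppose det D²w(y) ≥ λ for all y ∈ Ω, where λ > 0. Then w(y₀) ≤ sup_{y ∈ ∂Ω} w(y) − (1/2) λ^{1/n} r². -/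
/-- The determinant of the Hessian matrix `D²w(y)` of a function `w : ℝⁿ → ℝ`. -/
noncomputable def hessDet {n : ℕ} (w : EuclideanSpace ℝ (Fin n) → ℝ)
    (x : EuclideanSpace ℝ (Fin n)) : ℝ :=
  (Matrix.of fun i j : Fin n =>
    fderiv ℝ (fun y => fderiv ℝ w y (EuclideanSpace.single j 1)) x
      (EuclideanSpace.single i 1)).det

open Set Filter Topology

/-- Second derivative test (converse direction): if `f` has a local max at `0`,
`f' = F` near `0`, and `F` has derivative `m` at `0`, then `m ≤ 0`. -/
lemma deriv2_nonpos_of_isLocalMax {f F : ℝ → ℝ} {m : ℝ}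
    (hf : ∀ᶠ t in 𝓝 (0:ℝ), HasDerivAt f (F t) t)
    (hF : HasDerivAt F m 0) (hmax : IsLocalMax f 0) : m ≤ 0 := by
  by_contra hm
  push_neg at hm
  have hF0 : F 0 = 0 := hmax.hasDerivAt_eq_zero hf.self_of_nhds
  have hslope : Tendsto (slope F 0) (𝓝[≠] (0:ℝ)) (𝓝 m) :=
    hasDerivAt_iff_tendsto_slope.1 hF
  have h1 : ∀ᶠ t in 𝓝[≠] (0:ℝ), 0 < slope F 0 t :=
    hslope.eventually (eventually_gt_nhds hm)
  have h2 : ∀ᶠ t in 𝓝[>] (0:ℝ), 0 < slope F 0 t :=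
    h1.filter_mono (nhdsWithin_mono 0 (fun x hx => ne_of_gt hx))
  obtain ⟨δ, hδ, hIoo⟩ := mem_nhdsGT_iff_exists_Ioo_subset.1 h2
  have hδ0 : (0:ℝ) < δ := hδ
  obtain ⟨ε, hε, hball⟩ := Metric.eventually_nhds_iff.1 (hf.and hmax)
  set t₀ : ℝ := min (ε/2) (δ/2) with ht₀def
  have ht₀ : 0 < t₀ := lt_min (by linarith) (by linarith)
  have ht₀ε : t₀ < ε := lt_of_le_of_lt (min_le_left _ _) (by linarith)
  have ht₀δ : t₀ < δ := lt_of_le_of_lt (min_le_right _ _) (by linarith)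
  have hmem : ∀ x ∈ Icc (0:ℝ) t₀, dist x (0:ℝ) < ε := by
    intro x hx
    rw [Real.dist_eq, sub_zero, abs_of_nonneg hx.1]
    exact lt_of_le_of_lt hx.2 ht₀ε
  obtain ⟨ξ, hξ, hξeq⟩ :=
    exists_hasDerivAt_eq_slope f F ht₀
      (fun x hx => ((hball (hmem x hx)).1.differentiableAt.continuousAt).continuousWithinAt)
      (fun x hx => (hball (hmem x (Ioo_subset_Icc_self hx))).1)
  have hpos : 0 < slope F 0 ξ := hIoo ⟨hξ.1, lt_trans hξ.2 ht₀δ⟩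
  rw [slope_def_field, hF0, sub_zero, sub_zero] at hpos
  have hFξ : 0 < F ξ := by
    have := mul_pos hpos hξ.1
    rwa [div_mul_cancel₀ _ (ne_of_gt hξ.1)] at this
  have hle : f t₀ ≤ f 0 := (hball (hmem t₀ ⟨le_of_lt ht₀, le_refl _⟩)).2
  have hnp : (f t₀ - f 0) / (t₀ - 0) ≤ 0 :=
    div_nonpos_of_nonpos_of_nonneg (by linarith) (by linarith)
  rw [hξeq] at hFξ
  linarith

lemma deriv2_nonneg_of_convex {f F : ℝ → ℝ} {δ m : ℝ} (hδ : 0 < δ)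
    (hf : ∀ t ∈ Ioo (-δ) δ, HasDerivAt f (F t) t)
    (hc : ConvexOn ℝ (Ioo (-δ) δ) f)
    (hF : HasDerivAt F m 0) : 0 ≤ m := by
  have hmono : MonotoneOn F (Ioo (-δ) δ) := by
    have h := hc.monotoneOn_deriv (fun x hx => (hf x hx).differentiableAt)
    intro a ha b hb hab
    have := h ha hb hab
    rwa [(hf a ha).deriv, (hf b hb).deriv] at this
  have h0 : (0:ℝ) ∈ Ioo (-δ) δ := ⟨neg_lt_zero.2 hδ, hδ⟩
  have hIoo : Ioo (-δ) δ ∈ 𝓝 (0:ℝ) := Ioo_mem_nhds (neg_lt_zero.2 hδ) hδ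
  have hs : ∀ᶠ t in 𝓝[≠] (0:ℝ), 0 ≤ slope F 0 t := by
    filter_upwards [self_mem_nhdsWithin,
      eventually_nhdsWithin_of_eventually_nhds (eventually_of_mem hIoo (fun x h => h))]
      with t hne ht
    rw [slope_def_field, sub_zero]
    rcases lt_or_gt_of_ne (hne : t ≠ 0) with h | h
    · rw [← neg_div_neg_eq]
      exact div_nonneg (by linarith [hmono ht h0 (le_of_lt h)]) (by linarith)
    · exact div_nonneg (by linarith [hmono h0 ht (le_of_lt h)]) (le_of_lt h)
  exact ge_of_tendsto (hasDerivAt_iff_tendsto_slope.1 hF) hs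

lemma det_le_pow_of_quadform {n : ℕ} (A : Matrix (Fin n) (Fin n) ℝ) (hA : A.IsHermitian) {c : ℝ}
    (h0 : ∀ x : EuclideanSpace ℝ (Fin n), 0 ≤ dotProduct x (A.mulVec x))
    (hc : ∀ x : EuclideanSpace ℝ (Fin n),
      dotProduct x (A.mulVec x) ≤ c * dotProduct x x) :
    A.det ≤ c ^ n := by
  have hquad : ∀ i, hA.eigenvalues i
      = dotProduct (⇑(hA.eigenvectorBasis i)) (A.mulVec (⇑(hA.eigenvectorBasis i))) := by
    intro i
    simpa using hA.eigenvalues_eq i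
  have hdp : ∀ i, dotProduct (⇑(hA.eigenvectorBasis i)) (⇑(hA.eigenvectorBasis i))
      = 1 := by
    intro i
    have h1 := real_inner_self_eq_norm_sq (hA.eigenvectorBasis i)
    rw [hA.eigenvectorBasis.orthonormal.1 i, one_pow] at h1
    rw [← h1, PiLp.inner_apply]
    simp only [dotProduct, RCLike.inner_apply, conj_trivial]
  have hbound : ∀ i, 0 ≤ hA.eigenvalues i ∧ hA.eigenvalues i ≤ c := by
    intro i
    constructor
    · rw [hquad i]; exact h0 (hA.eigenvectorBasis i)
    · have h := hc (hA.eigenvectorBasis i)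
      calc hA.eigenvalues i
          = dotProduct (⇑(hA.eigenvectorBasis i)) (A.mulVec (⇑(hA.eigenvectorBasis i))) :=
            hquad i
        _ ≤ c * dotProduct (⇑(hA.eigenvectorBasis i)) (⇑(hA.eigenvectorBasis i)) := h
        _ = c := by rw [hdp i, mul_one]
  have hdet : A.det = ∏ i, hA.eigenvalues i := by
    simpa using hA.det_eq_prod_eigenvalues
  rw [hdet]
  calc ∏ i, hA.eigenvalues i ≤ ∏ _i : Fin n, c :=
        Finset.prod_le_prod (fun i _ => (hbound i).1) (fun i _ => (hbound i).2)
    _ = c ^ n := by simp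

/-- Barrier estimate via the comparison principle for the real Monge–Ampère operator:
if `w` is continuous on the closure of a bounded convex open set `Ω`, convex and `C²`
on `Ω`, with `det D²w ≥ λ > 0` on `Ω`, and `B(y₀, r) ⊆ Ω`, then
`w(y₀) ≤ sup_{∂Ω} w − (1/2) λ^{1/n} r²`. -/
theorem monge_ampere_barrier (n : ℕ) (hn : 1 ≤ n)
    (Ω : Set (EuclideanSpace ℝ (Fin n))) (hΩb : Bornology.IsBounded Ω)
    (hΩc : Convex ℝ Ω) (hΩo : IsOpen Ω)
    (y₀ : EuclideanSpace ℝ (Fin n)) (hy₀ : y₀ ∈ Ω) (r : ℝ) (hr : 0 < r)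
    (hball : Metric.ball y₀ r ⊆ Ω)
    (w : EuclideanSpace ℝ (Fin n) → ℝ) (hcont : ContinuousOn w (closure Ω))
    (hconv : ConvexOn ℝ Ω w) (hC2 : ContDiffOn ℝ 2 w Ω)
    (lam : ℝ) (hlam : 0 < lam) (hdet : ∀ y ∈ Ω, lam ≤ hessDet w y) :
    w y₀ ≤ sSup (w '' frontier Ω) - (1 / 2) * lam ^ ((1 : ℝ) / n) * r ^ 2 := by
  classical
  have hclos : IsCompact (closure Ω) := hΩb.isCompact_closure
  set M := sSup (w '' frontier Ω) with hM
  have hfr_cpt : IsCompact (frontier Ω) :=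
    hclos.of_isClosed_subset isClosed_frontier frontier_subset_closure
  have hbdd : BddAbove (w '' frontier Ω) :=
    (hfr_cpt.image_of_continuousOn (hcont.mono frontier_subset_closure)).bddAbove
  have key : ∀ ε ∈ Set.Ioo (0:ℝ) lam,
      w y₀ ≤ M - 1/2 * (lam - ε) ^ ((1:ℝ)/n) * r^2 := by
    intro ε hε
    set c : ℝ := (lam - ε) ^ ((1:ℝ)/n) with hcdef
    have hlamε : 0 < lam - ε := by linarith [hε.2]
    have hcpos : 0 < c := Real.rpow_pos_of_pos hlamε _
    set u : EuclideanSpace ℝ (Fin n) → ℝ := fun y => w y - c/2 * ‖y - y₀‖^2 with hu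
    have hucont : ContinuousOn u (closure Ω) := by
      apply hcont.sub
      exact (continuous_const.mul ((continuous_id.sub continuous_const).norm.pow 2)).continuousOn
    obtain ⟨z, hzcl, hzmax⟩ := hclos.exists_isMaxOn ⟨y₀, subset_closure hy₀⟩ hucont
    by_cases hzΩ : z ∈ Ω
    · exfalso
      have hdiff : ∀ y ∈ Ω, HasFDerivAt w (fderiv ℝ w y) y := fun y hy =>
        ((hC2.contDiffAt (hΩo.mem_nhds hy)).differentiableAt two_ne_zero).hasFDerivAt
      set B := fderiv ℝ (fderiv ℝ w) z with hBdef
      have hB : HasFDerivAt (fderiv ℝ w) B z :=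
        (((hC2.contDiffAt (hΩo.mem_nhds hzΩ)).fderiv_right (by norm_num)).differentiableAt
          one_ne_zero).hasFDerivAt
      have hev : ∀ᶠ y in 𝓝 z, HasFDerivAt w (fderiv ℝ w y) y :=
        Filter.eventually_of_mem (hΩo.mem_nhds hzΩ) hdiff
      have hsymm : ∀ v u', B v u' = B u' v := fun v u' =>
        second_derivative_symmetric_of_eventually hev hB v u'
      have hdir : ∀ v : EuclideanSpace ℝ (Fin n),
          0 ≤ B v v ∧ B v v ≤ c * (inner ℝ v v : ℝ) := by
        intro v
        have hlinecont : Continuous (fun t : ℝ => z + t • v) :=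
          continuous_const.add (continuous_id.smul continuous_const)
        obtain ⟨δ, hδpos, hδsub⟩ : ∃ δ : ℝ, 0 < δ ∧ ∀ t ∈ Set.Ioo (-δ) δ, z + t • v ∈ Ω := by
          obtain ⟨δ, hδpos, hb⟩ := Metric.isOpen_iff.1 (hΩo.preimage hlinecont) 0
            (by simpa using hzΩ)
          refine ⟨δ, hδpos, fun t ht => ?_⟩
          have : t ∈ (fun t : ℝ => z + t • v) ⁻¹' Ω := by
            apply hb
            rw [Metric.mem_ball, Real.dist_eq, sub_zero, abs_lt]
            exact ⟨ht.1, ht.2⟩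
          exact this
        have hline : ∀ t : ℝ, HasDerivAt (fun s : ℝ => z + s • v) v t := fun t => by
          simpa using ((hasDerivAt_id t).smul_const v).const_add z
        set F : ℝ → ℝ := fun t => fderiv ℝ w (z + t • v) v with hFdef
        have hφ : ∀ t ∈ Set.Ioo (-δ) δ, HasDerivAt (fun s => w (z + s • v)) (F t) t :=
          fun t ht => (hdiff _ (hδsub t ht)).comp_hasDerivAt_of_eq t (hline t) rfl
        have hG : HasDerivAt (fun t : ℝ => fderiv ℝ w (z + t • v)) (B v) 0 :=
          hB.comp_hasDerivAt_of_eq 0 (hline 0) (by simp)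
        have hFd : HasDerivAt F (B v v) 0 := by
          simpa using hG.clm_apply (hasDerivAt_const 0 v)
        constructor
        · have h2 : ∀ t : ℝ, (AffineMap.lineMap z (z + v)) t = z + t • v := by
            intro t
            rw [AffineMap.lineMap_apply_module]
            rw [sub_smul, one_smul, smul_add]
            abel
          have h1 := hconv.comp_affineMap (AffineMap.lineMap z (z + v))
          have hfun : (w ∘ (AffineMap.lineMap z (z + v))) = fun s : ℝ => w (z + s • v) :=
            funext fun t => by rw [Function.comp_apply, h2 t]
          have hcv : ConvexOn ℝ (Set.Ioo (-δ) δ) (fun s => w (z + s • v)) := by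
            rw [← hfun]
            refine h1.subset (fun t ht => ?_) (convex_Ioo _ _)
            rw [Set.mem_preimage, h2 t]
            exact hδsub t ht
          exact deriv2_nonneg_of_convex hδpos hφ hcv hFd
        · set a := z - y₀ with hadef
          set Q : ℝ → ℝ := fun t =>
            (inner ℝ a a : ℝ) + 2 * t * (inner ℝ a v : ℝ) + t^2 * (inner ℝ v v : ℝ) with hQdef
          have hnq : ∀ t : ℝ, ‖z + t • v - y₀‖^2 = Q t := by
            intro t
            have hx : z + t • v - y₀ = a + t • v := by rw [hadef]; abel
            rw [hx, ← real_inner_self_eq_norm_sq, real_inner_add_add_self,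
              real_inner_smul_right, real_inner_smul_left, real_inner_smul_right, hQdef]
            ring
          have hqeq : ∀ t : ℝ, u (z + t • v) = w (z + t • v) - c/2 * Q t := by
            intro t
            rw [hu]
            simp only
            rw [hnq t]
          have hQ' : ∀ t : ℝ, HasDerivAt Q
              (2 * (inner ℝ a v : ℝ) + 2 * t * (inner ℝ v v : ℝ)) t := by
            intro t
            have h1 : HasDerivAt (fun s : ℝ => 2 * s * (inner ℝ a v : ℝ))
                (2 * (inner ℝ a v : ℝ)) t := by
              simpa using ((hasDerivAt_id t).const_mul (2:ℝ)).mul_const ((inner ℝ a v : ℝ))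
            have h2 : HasDerivAt (fun s : ℝ => s^2 * (inner ℝ v v : ℝ))
                (2 * t * (inner ℝ v v : ℝ)) t := by
              have := (hasDerivAt_pow 2 t).mul_const ((inner ℝ v v : ℝ))
              simpa using this
            have := ((hasDerivAt_const t ((inner ℝ a a : ℝ))).add h1).add h2
            simpa [hQdef, Pi.add_def] using this
          set Fu : ℝ → ℝ := fun t =>
            F t - c/2 * (2 * (inner ℝ a v : ℝ) + 2 * t * (inner ℝ v v : ℝ)) with hFudef
          have hf2 : ∀ᶠ t in 𝓝 (0:ℝ),
              HasDerivAt (fun s => w (z + s • v) - c/2 * Q s) (Fu t) t := by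
            filter_upwards [Ioo_mem_nhds (neg_lt_zero.2 hδpos) hδpos] with t ht
            exact (hφ t ht).sub ((hQ' t).const_mul (c/2))
          have hFu' : HasDerivAt Fu (B v v - c * (inner ℝ v v : ℝ)) 0 := by
            have h2 : HasDerivAt (fun t : ℝ =>
                c/2 * (2 * (inner ℝ a v : ℝ) + 2 * t * (inner ℝ v v : ℝ)))
                (c/2 * (2 * (inner ℝ v v : ℝ))) 0 := by
              have := ((hasDerivAt_const (0:ℝ) (2 * (inner ℝ a v : ℝ))).add
                (((hasDerivAt_id (0:ℝ)).const_mul (2:ℝ)).mul_const ((inner ℝ v v : ℝ)))).const_mul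
                  (c/2)
              simpa using this
            have h3 := hFd.sub h2
            exact h3.congr_deriv (by ring)
          have hmax : IsLocalMax (fun s => w (z + s • v) - c/2 * Q s) 0 := by
            filter_upwards [Ioo_mem_nhds (neg_lt_zero.2 hδpos) hδpos] with t ht
            have h1 : u (z + t • v) ≤ u z := hzmax (subset_closure (hδsub t ht))
            have h0' : u (z + (0:ℝ) • v) = u z := by norm_num
            calc w (z + t • v) - c/2 * Q t = u (z + t • v) := (hqeq t).symm
              _ ≤ u z := h1
              _ = w (z + (0:ℝ) • v) - c/2 * Q 0 := by rw [← h0', hqeq 0]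
          have hle := deriv2_nonpos_of_isLocalMax hf2 hFu' hmax
          linarith
      set A : Matrix (Fin n) (Fin n) ℝ := Matrix.of fun i j =>
        B (EuclideanSpace.single i 1) (EuclideanSpace.single j 1) with hAdef
      have hAdet : hessDet w z = A.det := by
        unfold hessDet
        congr 1
        ext i j
        have hj : HasFDerivAt (fun y => fderiv ℝ w y (EuclideanSpace.single j (1:ℝ)))
            ((ContinuousLinearMap.apply ℝ ℝ (EuclideanSpace.single j (1:ℝ))).comp B) z :=
          ((ContinuousLinearMap.apply ℝ ℝ (EuclideanSpace.single j (1:ℝ))).hasFDerivAt).comp z hB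
        simp only [Matrix.of_apply, hAdef]
        rw [hj.fderiv]
        rfl
      have hAherm : A.IsHermitian := by
        rw [Matrix.IsHermitian]
        ext i j
        simp [hAdef, Matrix.conjTranspose_apply, hsymm]
      have hrepr : ∀ v : EuclideanSpace ℝ (Fin n),
          v = ∑ i, v i • EuclideanSpace.single i (1:ℝ) := by
        intro v
        have h := (EuclideanSpace.basisFun (Fin n) ℝ).sum_repr v
        simp only [EuclideanSpace.basisFun_repr, EuclideanSpace.basisFun_apply] at h
        exact h.symm
      have hquadform : ∀ v : EuclideanSpace ℝ (Fin n),
          dotProduct v (A.mulVec v) = B v v := by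
        intro v
        have hrhs : B v v = ∑ i, ∑ j, v i * (v j *
            B (EuclideanSpace.single i 1) (EuclideanSpace.single j 1)) := by
          conv_lhs => rw [hrepr v]
          simp only [map_sum, map_smul, ContinuousLinearMap.sum_apply,
            ContinuousLinearMap.smul_apply, ContinuousLinearMap.coe_sum', Finset.sum_apply,
            smul_eq_mul, Finset.mul_sum]
          rw [Finset.sum_comm]
          refine Finset.sum_congr rfl fun i _ => Finset.sum_congr rfl fun j _ => by ring
        rw [hrhs]
        simp only [dotProduct, Matrix.mulVec, Matrix.of_apply, hAdef]
        refine Finset.sum_congr rfl fun i _ => ?_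
        rw [Finset.mul_sum]
        refine Finset.sum_congr rfl fun j _ => ?_
        ring
      have hinner_dot : ∀ x : EuclideanSpace ℝ (Fin n),
          (inner ℝ x x : ℝ) = dotProduct x x := by
        intro x
        simp only [PiLp.inner_apply, RCLike.inner_apply, conj_trivial, dotProduct]
      have hdet_le : A.det ≤ c ^ n := by
        refine det_le_pow_of_quadform A hAherm (fun x => ?_) (fun x => ?_)
        · rw [hquadform x]; exact (hdir x).1
        · rw [hquadform x, ← hinner_dot x]; exact (hdir x).2
      have hcn : c ^ n = lam - ε := by
        have hn0 : (n:ℝ) ≠ 0 := Nat.cast_ne_zero.2 (by omega)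
        rw [hcdef, ← Real.rpow_natCast ((lam - ε) ^ ((1:ℝ)/n)) n,
          ← Real.rpow_mul (le_of_lt hlamε), one_div, inv_mul_cancel₀ hn0, Real.rpow_one]
      have hld := hdet z hzΩ
      rw [hAdet] at hld
      have hε0 := hε.1
      linarith
    · have hzfr : z ∈ frontier Ω := by
        rw [hΩo.frontier_eq]
        exact ⟨hzcl, hzΩ⟩
      have hwz : w z ≤ M := le_csSup hbdd (Set.mem_image_of_mem w hzfr)
      have hznb : r ≤ ‖z - y₀‖ := by
        by_contra h
        push_neg at h
        exact hzΩ (hball (by rwa [Metric.mem_ball, dist_eq_norm]))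
      have h1 : u y₀ ≤ u z := hzmax (subset_closure hy₀)
      have h2 : u y₀ = w y₀ := by simp [hu]
      have h3 : c/2 * r^2 ≤ c/2 * ‖z - y₀‖^2 := by
        apply mul_le_mul_of_nonneg_left _ (by positivity)
        exact pow_le_pow_left₀ (le_of_lt hr) hznb 2
      have h4 : u z = w z - c/2 * ‖z - y₀‖^2 := by rw [hu]
      have h5 : (1:ℝ)/2 * c * r^2 = c/2 * r^2 := by ring
      clear_value u c M
      linarith
  have hlim : Tendsto (fun ε : ℝ => M - 1/2 * (lam - ε) ^ ((1:ℝ)/n) * r^2) (𝓝[>] 0)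
      (𝓝 (M - 1/2 * lam ^ ((1:ℝ)/n) * r^2)) := by
    have h1 : Tendsto (fun ε : ℝ => lam - ε) (𝓝[>] (0:ℝ)) (𝓝 lam) := by
      have h : Tendsto (fun ε : ℝ => lam - ε) (𝓝 (0:ℝ)) (𝓝 (lam - 0)) :=
        (continuous_const.sub continuous_id).tendsto 0
      rw [sub_zero] at h
      exact h.mono_left nhdsWithin_le_nhds
    have h2 : Tendsto (fun ε : ℝ => (lam - ε) ^ ((1:ℝ)/n)) (𝓝[>] (0:ℝ))
        (𝓝 (lam ^ ((1:ℝ)/n))) :=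
      ((Real.continuousAt_rpow_const lam _ (Or.inl (ne_of_gt hlam))).tendsto).comp h1
    exact ((h2.const_mul (1/2 : ℝ)).mul_const (r^2)).const_sub M
  have hfin : w y₀ ≤ M - 1/2 * lam ^ ((1:ℝ)/n) * r^2 := by
    refine ge_of_tendsto hlim ?_
    filter_upwards [Ioo_mem_nhdsGT_of_mem ⟨le_refl (0:ℝ), hlam⟩] with ε hε
    exact key ε hε
  linarith
end

section
/- Let n ≥ 1, let Ω* ⊂ ℝⁿ be a bounded convex open set, let c ∈ ℝⁿ, c_X ∈ ℝ, and let v : ℝⁿ → ℝ be continuous. Suppose w : ℝⁿ → ℝ is a smooth convex function such that the gradient map ∇w : ℝⁿ → Ω* is a C^∞ diffeomorphism onto Ω*, and such that det D²w(x) = exp(−c_X − v(x) − ⟨c, ∇w(x)⟩) for all x ∈ ℝⁿ. Then for every coordinate i = 1, …, n, ∫_{ℝⁿ} (∂w/∂x_i)(x) · exp(−v(x)) dx = exp(c_X) · ∫_{Ω*} y_i e^{⟨c, y⟩} dy. In particular, if ∫_{Ω*} y_i e^{⟨c,y⟩} dy = 0 for all i, then ∫_{ℝⁿ} ∇w(x)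 e^{−v(x)} dx = 0. -/
open MeasureTheory
open scoped RealInnerProductSpace

lemma grad_contDiff {n : ℕ} (w : EuclideanSpace ℝ (Fin n) → ℝ)
    (hw : ContDiff ℝ (⊤ : ℕ∞) w) : ContDiff ℝ (⊤ : ℕ∞) (fun x => gradient w x) :=
  (InnerProductSpace.toDual ℝ _).symm.contDiff.comp (hw.fderiv_right (le_refl _))

lemma fderiv_grad_det {n : ℕ} (w : EuclideanSpace ℝ (Fin n) → ℝ)
    (hw : ContDiff ℝ (⊤ : ℕ∞) w) (x : EuclideanSpace ℝ (Fin n)) :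
    (fderiv ℝ (fun y => gradient w y) x).det = hessDet w x := by
  have hgrad := grad_contDiff w hw
  have hco : ∀ i : Fin n, (fun y => (gradient w y) i)
      = fun y => fderiv ℝ w y (EuclideanSpace.single i 1) := by
    intro i; funext y
    have h : ⟪gradient w y, EuclideanSpace.single i 1⟫
        = fderiv ℝ w y (EuclideanSpace.single i 1) := InnerProductSpace.toDual_symm_apply
    rw [← h, EuclideanSpace.inner_single_right]; simp
  set L := fderiv ℝ (fun y => gradient w y) x with hL
  have key : ∀ (u : EuclideanSpace ℝ (Fin n)) (i : Fin n),
      L u i = fderiv ℝ (fun y => fderiv ℝ w y (EuclideanSpace.single i 1)) x u := by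
    intro u i
    have hdA : HasFDerivAt (fun y => gradient w y) L x :=
      (hgrad.differentiable (by simp)).differentiableAt.hasFDerivAt
    have hc := (EuclideanSpace.proj i).hasFDerivAt.comp x hdA
    have h2 : fderiv ℝ (fun y => (gradient w y) i) x = (EuclideanSpace.proj i).comp L :=
      hc.fderiv
    rw [← hco i, h2]
    rfl
  rw [ContinuousLinearMap.det, ← LinearMap.det_toMatrix (EuclideanSpace.basisFun (Fin n) ℝ).toBasis]
  have : LinearMap.toMatrix (EuclideanSpace.basisFun (Fin n) ℝ).toBasis
      (EuclideanSpace.basisFun (Fin n) ℝ).toBasis L.toLinearMap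
      = (Matrix.of fun i j : Fin n =>
        fderiv ℝ (fun y => fderiv ℝ w y (EuclideanSpace.single j 1)) x
          (EuclideanSpace.single i 1)).transpose := by
    ext i j
    rw [LinearMap.toMatrix_apply]
    simp only [OrthonormalBasis.coe_toBasis, OrthonormalBasis.coe_toBasis_repr_apply,
      EuclideanSpace.basisFun_apply, EuclideanSpace.basisFun_repr, Matrix.transpose_apply,
      Matrix.of_apply, ContinuousLinearMap.coe_coe]
    exact key _ _
  rw [this, Matrix.det_transpose, hessDet]

/-- Vector-valued change of variables `y = ∇w(x)` for a smooth convex solution of the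
real Monge–Ampère equation `det D²w = exp(−c_X − v − ⟨c, ∇w⟩)` whose gradient is a
diffeomorphism onto the bounded convex open set `Ω*`: for each coordinate `i`,
`∫ (∂w/∂xᵢ) e^{−v} dx = e^{c_X} ∫_{Ω*} yᵢ e^{⟨c,y⟩} dy`; in particular if all these
moments vanish then `∫ ∇w · e^{−v} dx = 0`. -/
theorem monge_ampere_futaki_identity (n : ℕ) (hn : 1 ≤ n)
    (Ωs : Set (EuclideanSpace ℝ (Fin n))) (hΩb : Bornology.IsBounded Ωs)
    (hΩc : Convex ℝ Ωs) (hΩo : IsOpen Ωs)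
    (c : EuclideanSpace ℝ (Fin n)) (cX : ℝ)
    (v : EuclideanSpace ℝ (Fin n) → ℝ) (hv : Continuous v)
    (w : EuclideanSpace ℝ (Fin n) → ℝ)
    (hw : ContDiff ℝ (⊤ : ℕ∞) w) (hwconv : ConvexOn ℝ Set.univ w)
    (hbij : Set.BijOn (fun x => gradient w x) Set.univ Ωs)
    (hdiffeo : ∃ g : EuclideanSpace ℝ (Fin n) → EuclideanSpace ℝ (Fin n),
        ContDiffOn ℝ (⊤ : ℕ∞) g Ωs ∧ (∀ x, g (gradient w x) = x) ∧
        ∀ y ∈ Ωs, gradient w (g y) = y)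
    (hMA : ∀ x, hessDet w x = Real.exp (-cX - v x - ⟪c, gradient w x⟫)) :
    (∀ i : Fin n,
      ∫ x, (gradient w x) i * Real.exp (-(v x))
        = Real.exp cX * ∫ y in Ωs, (y i) * Real.exp ⟪c, y⟫) ∧
    ((∀ i : Fin n, ∫ y in Ωs, (y i) * Real.exp ⟪c, y⟫ = 0) →
      ∫ x, Real.exp (-(v x)) • gradient w x = 0) := by
  have hgrad := grad_contDiff w hw
  have hfd : ∀ x ∈ (Set.univ : Set (EuclideanSpace ℝ (Fin n))),
      HasFDerivWithinAt (fun y => gradient w y) (fderiv ℝ (fun y => gradient w y) x)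
        Set.univ x := fun x _ =>
    ((hgrad.differentiable (by simp)).differentiableAt.hasFDerivAt).hasFDerivWithinAt
  have himg : (fun x => gradient w x) '' Set.univ = Ωs := hbij.image_eq
  -- main change of variables identity
  have key : ∀ i : Fin n,
      ∫ x, (gradient w x) i * Real.exp (-(v x))
        = Real.exp cX * ∫ y in Ωs, (y i) * Real.exp ⟪c, y⟫ := by
    intro i
    have cov := integral_image_eq_integral_abs_det_fderiv_smul volume MeasurableSet.univ
      hfd hbij.injOn (fun y => (y i) * Real.exp (cX + ⟪c, y⟫))
    rw [himg, setIntegral_univ] at cov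
    have lhs_eq : ∫ y in Ωs, (y i) * Real.exp (cX + ⟪c, y⟫)
        = Real.exp cX * ∫ y in Ωs, (y i) * Real.exp ⟪c, y⟫ := by
      rw [← integral_const_mul]
      congr 1; funext y
      rw [Real.exp_add]; ring
    have rhs_eq : ∀ x, |(fderiv ℝ (fun y => gradient w y) x).det| •
        ((gradient w x) i * Real.exp (cX + ⟪c, gradient w x⟫))
        = (gradient w x) i * Real.exp (-(v x)) := by
      intro x
      rw [fderiv_grad_det w hw x, hMA x, abs_of_pos (Real.exp_pos _), smul_eq_mul,
        ← mul_assoc, mul_comm (Real.exp _) _, mul_assoc, ← Real.exp_add]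
      ring_nf
    rw [← lhs_eq, cov]
    congr 1; funext x
    exact (rhs_eq x).symm
  refine ⟨key, fun h => ?_⟩
  by_cases hint : Integrable (fun x => Real.exp (-(v x)) • gradient w x)
  · have hcoord : ∀ i : Fin n,
        (∫ x, Real.exp (-(v x)) • gradient w x) i = 0 := by
      intro i
      have := (EuclideanSpace.proj (𝕜 := ℝ) i).integral_comp_comm hint
      have h2 : (∫ x, Real.exp (-(v x)) • gradient w x) i
          = ∫ x, Real.exp (-(v x)) * (gradient w x) i := this.symm
      rw [h2]
      have h3 : (fun x => Real.exp (-(v x)) * (gradient w x) i)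
          = fun x => (gradient w x) i * Real.exp (-(v x)) := by funext x; ring
      rw [h3, key i, h i, mul_zero]
    ext i
    rw [hcoord i]
    rfl
  · rw [integral_undef hint]
end

section
/- Let n ≥ 1 and let Ω* ⊂ ℝⁿ be a bounded convex open set with 0 ∈ Ω*. Then there exists a unique vector c ∈ ℝⁿ such that ∫_{Ω*} y_i e^{⟨c, y⟩} dy = 0 for every coordinate i = 1, …, n. -/
open MeasureTheory
open scoped RealInnerProductSpace

namespace SolitonAux

open Metric

variable {n : ℕ} {Ωs : Set (EuclideanSpace ℝ (Fin n))}

private lemma cont_exp (c : EuclideanSpace ℝ (Fin n)) :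
    Continuous fun y : EuclideanSpace ℝ (Fin n) => Real.exp ⟪c, y⟫ :=
  Real.continuous_exp.comp (continuous_const.inner continuous_id)

private lemma integrableOn_cont (hΩb : Bornology.IsBounded Ωs)
    {f : EuclideanSpace ℝ (Fin n) → ℝ} (hf : Continuous f) : IntegrableOn f Ωs :=
  (hf.continuousOn.integrableOn_compact hΩb.isCompact_closure).mono_set subset_closure

/-- Derivative of `t ↦ ∫ exp ⟪c + t v, y⟫` at `0`. -/
private lemma hasDerivAt_int (hΩb : Bornology.IsBounded Ωs) (hΩo : IsOpen Ωs)
    (c v : EuclideanSpace ℝ (Fin n)) :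
    HasDerivAt (fun t : ℝ => ∫ y in Ωs, Real.exp ⟪c + t • v, y⟫)
      (∫ y in Ωs, ⟪v, y⟫ * Real.exp ⟪c, y⟫) 0 := by
  obtain ⟨R, hR⟩ := hΩb.subset_closedBall 0
  have hR0 : 0 ≤ R ∨ Ωs = ∅ := by
    by_cases h : Ωs = ∅
    · exact Or.inr h
    · obtain ⟨y, hy⟩ := Set.nonempty_iff_ne_empty.2 h
      exact Or.inl ((norm_nonneg y).trans (by simpa using hR hy))
  -- we may as well handle the empty case directly
  rcases hR0 with hR0 | hE
  swap
  · simp [hE, hasDerivAt_const]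
  have key := hasDerivAt_integral_of_dominated_loc_of_deriv_le
      (μ := volume.restrict Ωs) (x₀ := (0:ℝ))
      (F := fun t y => Real.exp ⟪c + t • v, y⟫)
      (F' := fun t y => ⟪v, y⟫ * Real.exp ⟪c + t • v, y⟫)
      (bound := fun _ => ‖v‖ * R * Real.exp ((‖c‖ + ‖v‖) * R))
      (s := Metric.ball (0:ℝ) 1) (Metric.ball_mem_nhds _ one_pos)
      (Filter.Eventually.of_forall fun t =>
        ((cont_exp (c + t • v)).aestronglyMeasurable).restrict)
      ((integrableOn_cont hΩb (cont_exp (c + (0:ℝ) • v))))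
      ((((continuous_const.inner continuous_id).mul
        (cont_exp (c + (0:ℝ) • v))).aestronglyMeasurable).restrict)
      ?bound
      ?bint
      ?diff
  case bound =>
    filter_upwards [ae_restrict_mem hΩo.measurableSet] with y hy t ht
    have hyR : ‖y‖ ≤ R := by simpa using hR hy
    have h1 : |⟪v, y⟫| ≤ ‖v‖ * R :=
      (abs_real_inner_le_norm v y).trans (by gcongr)
    have h2 : ⟪c + t • v, y⟫ ≤ (‖c‖ + ‖v‖) * R := by
      refine (real_inner_le_norm _ _).trans ?_
      have : ‖c + t • v‖ ≤ ‖c‖ + ‖v‖ := by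
        refine (norm_add_le _ _).trans ?_
        have : ‖t • v‖ ≤ ‖v‖ := by
          rw [norm_smul]
          have : |t| ≤ 1 := le_of_lt (by simpa [Real.norm_eq_abs] using ht)
          simpa [Real.norm_eq_abs] using
            mul_le_of_le_one_left (norm_nonneg v) this
        linarith
      calc ‖c + t • v‖ * ‖y‖ ≤ (‖c‖ + ‖v‖) * ‖y‖ := by gcongr
        _ ≤ (‖c‖ + ‖v‖) * R := by gcongr <;> positivity
    have h3 : Real.exp ⟪c + t • v, y⟫ ≤ Real.exp ((‖c‖ + ‖v‖) * R) :=
      Real.exp_le_exp.2 h2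
    rw [Real.norm_eq_abs, abs_mul, abs_of_pos (Real.exp_pos _)]
    exact mul_le_mul h1 h3 (Real.exp_pos _).le (by positivity)
  case bint => exact integrableOn_cont hΩb continuous_const
  case diff =>
    refine Filter.Eventually.of_forall fun y t _ => ?_
    have base : HasDerivAt (fun t : ℝ => ⟪c, y⟫ + t * ⟪v, y⟫) ⟪v, y⟫ t :=
      (hasDerivAt_mul_const ⟪v, y⟫).const_add ⟪c, y⟫
    have := base.exp
    have heq : (fun t : ℝ => Real.exp (⟪c, y⟫ + t * ⟪v, y⟫))
        = fun t : ℝ => Real.exp ⟪c + t • v, y⟫ := by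
      funext s
      rw [inner_add_left, real_inner_smul_left]
    rw [heq] at this
    show HasDerivAt (fun s : ℝ => Real.exp ⟪c + s • v, y⟫) (⟪v, y⟫ * Real.exp ⟪c + t • v, y⟫) t
    convert this using 1
    rw [inner_add_left, real_inner_smul_left]
    ring
  simpa using key.2

/-- Continuity of `c ↦ ∫ exp ⟪c, y⟫`. -/
private lemma continuous_int (hΩb : Bornology.IsBounded Ωs) (hΩo : IsOpen Ωs) :
    Continuous fun c : EuclideanSpace ℝ (Fin n) => ∫ y in Ωs, Real.exp ⟪c, y⟫ := by
  obtain ⟨R, hR⟩ := hΩb.subset_closedBall 0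
  rw [continuous_iff_continuousAt]
  intro c₀
  refine continuousAt_of_dominated (bound := fun _ => Real.exp ((‖c₀‖ + 1) * |R|))
    (Filter.Eventually.of_forall fun c => ((cont_exp c).aestronglyMeasurable).restrict)
    ?_ (integrableOn_cont hΩb continuous_const)
    (Filter.Eventually.of_forall fun y =>
      (Real.continuous_exp.comp (continuous_id.inner continuous_const)).continuousAt)
  filter_upwards [Metric.ball_mem_nhds c₀ one_pos] with c hc
  filter_upwards [ae_restrict_mem hΩo.measurableSet] with y hy
  have hyR : ‖y‖ ≤ |R| := le_trans (show ‖y‖ ≤ R by simpa using hR hy) (le_abs_self R)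
  have hc' : ‖c‖ ≤ ‖c₀‖ + 1 := by
    have := mem_ball_iff_norm.1 hc
    have := norm_sub_norm_le c c₀
    linarith
  have h2 : ⟪c, y⟫ ≤ (‖c₀‖ + 1) * |R| := by
    refine (real_inner_le_norm _ _).trans ?_
    calc ‖c‖ * ‖y‖ ≤ (‖c₀‖ + 1) * ‖y‖ := by gcongr
      _ ≤ (‖c₀‖ + 1) * |R| := by gcongr <;> positivity
  rw [Real.norm_eq_abs, abs_of_pos (Real.exp_pos _)]
  exact Real.exp_le_exp.2 h2

end SolitonAux

open SolitonAux Metric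

/-- For a bounded convex open set `Ω* ⊆ ℝⁿ` containing the origin, there is a unique
vector `c ∈ ℝⁿ` such that `∫_{Ω*} yᵢ e^{⟨c,y⟩} dy = 0` for every coordinate `i`
(the soliton vector field coefficients, i.e. the vanishing of the modified Futaki
functional). -/
theorem exists_unique_soliton_vector (n : ℕ) (hn : 1 ≤ n)
    (Ωs : Set (EuclideanSpace ℝ (Fin n))) (hΩb : Bornology.IsBounded Ωs)
    (hΩc : Convex ℝ Ωs) (hΩo : IsOpen Ωs)
    (h0 : (0 : EuclideanSpace ℝ (Fin n)) ∈ Ωs) :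
    ∃! c : EuclideanSpace ℝ (Fin n),
      ∀ i : Fin n, ∫ y in Ωs, (y i) * Real.exp ⟪c, y⟫ = 0 := by
  classical
  -- continuity of coordinates
  have contc : ∀ i : Fin n, Continuous fun y : EuclideanSpace ℝ (Fin n) => y i :=
    fun i => (EuclideanSpace.proj (𝕜 := ℝ) i).continuous
  -- the free energy
  have hFc : Continuous fun c : EuclideanSpace ℝ (Fin n) => ∫ y in Ωs, Real.exp ⟪c, y⟫ :=
    continuous_int hΩb hΩo
  -- small ball around the origin
  obtain ⟨ε₂, hε₂, hball⟩ := Metric.isOpen_iff.1 hΩo 0 h0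
  set ε : ℝ := ε₂ / 2 with hεdef
  have hε : 0 < ε := by positivity
  have hball' : Metric.ball (0 : EuclideanSpace ℝ (Fin n)) (2 * ε) ⊆ Ωs := by
    intro y hy
    apply hball
    simp only [Metric.mem_ball] at hy ⊢
    rw [hεdef] at hy
    linarith
  set V : ℝ := (volume (Metric.ball (0 : EuclideanSpace ℝ (Fin n)) (ε / 2))).toReal with hVdef
  have hV : 0 < V := by
    refine ENNReal.toReal_pos (measure_ball_pos volume 0 (by positivity)).ne' ?_
    exact measure_ball_lt_top.ne
  -- coercivity
  have coer : ∀ c : EuclideanSpace ℝ (Fin n),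
      V * Real.exp (ε * ‖c‖ / 2) ≤ ∫ y in Ωs, Real.exp ⟪c, y⟫ := by
    intro c
    set p : EuclideanSpace ℝ (Fin n) := if c = 0 then 0 else (ε / ‖c‖) • c with hpdef
    have hpnorm : ‖p‖ ≤ ε := by
      rw [hpdef]
      split_ifs with hc
      · simpa using hε.le
      · rw [norm_smul, Real.norm_eq_abs, abs_of_pos (div_pos hε (norm_pos_iff.2 hc))]
        rw [div_mul_cancel₀]
        exact norm_ne_zero_iff.2 hc
    have hsub : Metric.ball p (ε / 2) ⊆ Ωs := by
      intro y hy
      apply hball'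
      rw [Metric.mem_ball, dist_zero_right]
      have h1 : dist y p < ε / 2 := hy
      have h2 : ‖y‖ ≤ ‖y - p‖ + ‖p‖ := by simpa using norm_add_le (y - p) p
      rw [dist_eq_norm] at h1
      linarith
    have hlower : ∀ y ∈ Metric.ball p (ε / 2), ε * ‖c‖ / 2 ≤ ⟪c, y⟫ := by
      intro y hy
      have h1 : ⟪c, p⟫ = ε * ‖c‖ := by
        rw [hpdef]
        split_ifs with hc
        · simp [hc]
        · have hcn : ‖c‖ ≠ 0 := norm_ne_zero_iff.2 hc
          rw [real_inner_smul_right, real_inner_self_eq_norm_mul_norm]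
          field_simp
      have h2 : |⟪c, y - p⟫| ≤ ‖c‖ * (ε / 2) := by
        refine (abs_real_inner_le_norm _ _).trans ?_
        have : ‖y - p‖ ≤ ε / 2 := by
          rw [← dist_eq_norm]
          exact (Metric.mem_ball.1 hy).le
        gcongr
      have h3 : ⟪c, y⟫ = ⟪c, p⟫ + ⟪c, y - p⟫ := by
        rw [← inner_add_right]
        norm_num
      have h4 := abs_le.1 h2
      rw [h3, h1]
      nlinarith [norm_nonneg c]
    have hintc : IntegrableOn (fun y => Real.exp ⟪c, y⟫) Ωs := integrableOn_cont hΩb (cont_exp c)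
    calc V * Real.exp (ε * ‖c‖ / 2)
        = Real.exp (ε * ‖c‖ / 2) * (volume (Metric.ball p (ε / 2))).toReal := by
          rw [hVdef, Measure.addHaar_ball_center volume p]
          ring
      _ ≤ ∫ y in Metric.ball p (ε / 2), Real.exp ⟪c, y⟫ :=
          setIntegral_ge_of_const_le_real measurableSet_ball measure_ball_lt_top.ne
            (fun y hy => Real.exp_le_exp.2 (hlower y hy)) (hintc.mono_set hsub)
      _ ≤ ∫ y in Ωs, Real.exp ⟪c, y⟫ :=
          setIntegral_mono_set hintc
            (Filter.Eventually.of_forall fun y => (Real.exp_pos _).le)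
            (HasSubset.Subset.eventuallyLE hsub)
  -- choose a radius beyond which the functional exceeds its value at `0`
  set F0 : ℝ := ∫ y in Ωs, Real.exp ⟪(0 : EuclideanSpace ℝ (Fin n)), y⟫ with hF0def
  have hF0 : V ≤ F0 := by
    rw [hF0def]
    simpa using coer 0
  set R : ℝ := max 1 ((2 / ε) * Real.log ((F0 + 1) / V)) with hRdef
  have hR1 : (1 : ℝ) ≤ R := le_max_left _ _
  have hbig : ∀ c : EuclideanSpace ℝ (Fin n), R ≤ ‖c‖ →
      F0 < ∫ y in Ωs, Real.exp ⟪c, y⟫ := by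
    intro c hc
    have hF0pos : 0 < F0 + 1 := by linarith
    have hlog : Real.log ((F0 + 1) / V) ≤ ε * ‖c‖ / 2 := by
      have h1 : (2 / ε) * Real.log ((F0 + 1) / V) ≤ ‖c‖ := (le_max_right _ _).trans hc
      have h2 : (ε / 2) * ((2 / ε) * Real.log ((F0 + 1) / V)) ≤ (ε / 2) * ‖c‖ :=
        mul_le_mul_of_nonneg_left h1 (by positivity)
      have h3 : (ε / 2) * ((2 / ε) * Real.log ((F0 + 1) / V)) = Real.log ((F0 + 1) / V) := by
        field_simp
      linarith
    have h4 : (F0 + 1) / V ≤ Real.exp (ε * ‖c‖ / 2) := by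
      rw [← Real.exp_log (div_pos hF0pos hV)]
      exact Real.exp_le_exp.2 hlog
    have h6 : F0 + 1 ≤ V * Real.exp (ε * ‖c‖ / 2) := by
      have := mul_le_mul_of_nonneg_left h4 hV.le
      rwa [mul_div_cancel₀ _ hV.ne'] at this
    linarith [coer c]
  obtain ⟨c₀, hc₀mem, hc₀min⟩ :=
    (isCompact_closedBall (0 : EuclideanSpace ℝ (Fin n)) R).exists_isMinOn
      ⟨0, Metric.mem_closedBall_self (by linarith)⟩ hFc.continuousOn
  have hc₀lt : ‖c₀‖ < R := by
    by_contra hcon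
    push_neg at hcon
    have h1 : (∫ y in Ωs, Real.exp ⟪c₀, y⟫) ≤ F0 :=
      isMinOn_iff.1 hc₀min 0 (Metric.mem_closedBall_self (by linarith))
    exact absurd (hbig c₀ hcon) (not_lt.2 h1)
  have hloc : IsLocalMin (fun c => ∫ y in Ωs, Real.exp ⟪c, y⟫) c₀ :=
    hc₀min.isLocalMin (mem_nhds_iff.2 ⟨Metric.ball 0 R, Metric.ball_subset_closedBall,
      Metric.isOpen_ball, mem_ball_zero_iff.2 hc₀lt⟩)
  have hzero : ∀ v : EuclideanSpace ℝ (Fin n),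
      ∫ y in Ωs, ⟪v, y⟫ * Real.exp ⟪c₀, y⟫ = 0 := by
    intro v
    have htend : Filter.Tendsto (fun t : ℝ => c₀ + t • v) (nhds 0) (nhds c₀) := by
      have hco : Continuous fun t : ℝ => c₀ + t • v :=
        continuous_const.add (continuous_id.smul continuous_const)
      have := hco.tendsto 0
      simpa using this
    have hline : IsLocalMin (fun t : ℝ => ∫ y in Ωs, Real.exp ⟪c₀ + t • v, y⟫) 0 := by
      refine (htend.eventually hloc).mono fun t ht => ?_
      simpa using ht
    exact hline.hasDerivAt_eq_zero (hasDerivAt_int hΩb hΩo c₀ v)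
  have heval : ∀ i : Fin n, ∫ y in Ωs, y i * Real.exp ⟪c₀, y⟫ = 0 := by
    intro i
    have h := hzero (EuclideanSpace.single i (1 : ℝ))
    have hs : ∀ y : EuclideanSpace ℝ (Fin n), ⟪EuclideanSpace.single i (1 : ℝ), y⟫ = y i := by
      intro y
      simp [EuclideanSpace.inner_single_left]
    simp_rw [hs] at h
    exact h
  -- the directional integrals vanish for any solution
  have hkey : ∀ b : EuclideanSpace ℝ (Fin n),
      (∀ i : Fin n, ∫ y in Ωs, y i * Real.exp ⟪b, y⟫ = 0) →
      ∀ v : EuclideanSpace ℝ (Fin n), ∫ y in Ωs, ⟪v, y⟫ * Real.exp ⟪b, y⟫ = 0 := by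
    intro b hb v
    have hrw : ∀ y : EuclideanSpace ℝ (Fin n),
        ⟪v, y⟫ * Real.exp ⟪b, y⟫ = ∑ i, v i * (y i * Real.exp ⟪b, y⟫) := by
      intro y
      rw [PiLp.inner_apply]
      simp only [RCLike.inner_apply, conj_trivial]
      rw [Finset.sum_mul]
      exact Finset.sum_congr rfl fun i _ => by ring
    calc ∫ y in Ωs, ⟪v, y⟫ * Real.exp ⟪b, y⟫
        = ∫ y in Ωs, ∑ i, v i * (y i * Real.exp ⟪b, y⟫) := by simp_rw [hrw]
      _ = ∑ i, ∫ y in Ωs, v i * (y i * Real.exp ⟪b, y⟫) :=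
          integral_finset_sum _ fun i _ =>
            integrableOn_cont hΩb (continuous_const.mul ((contc i).mul (cont_exp b)))
      _ = ∑ i, v i * ∫ y in Ωs, y i * Real.exp ⟪b, y⟫ := by
          simp_rw [integral_const_mul]
      _ = 0 := by
          rw [Finset.sum_eq_zero]
          intro i _
          rw [hb i, mul_zero]
  refine ⟨c₀, heval, ?_⟩
  intro c hc
  by_contra hne
  have hd : c - c₀ ≠ 0 := sub_ne_zero.2 hne
  have h1 := hkey c hc (c - c₀)
  have h2 := hkey c₀ heval (c - c₀)
  set d : EuclideanSpace ℝ (Fin n) := c - c₀ with hddef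
  set h : EuclideanSpace ℝ (Fin n) → ℝ :=
    fun y => ⟪d, y⟫ * (Real.exp ⟪c, y⟫ - Real.exp ⟪c₀, y⟫) with hhdef
  have hcont_h : Continuous h :=
    (continuous_const.inner continuous_id).mul ((cont_exp c).sub (cont_exp c₀))
  have hint : IntegrableOn h Ωs := integrableOn_cont hΩb hcont_h
  have hip : ∫ y in Ωs, h y = 0 := by
    have e1 : IntegrableOn (fun y => ⟪d, y⟫ * Real.exp ⟪c, y⟫) Ωs :=
      integrableOn_cont hΩb ((continuous_const.inner continuous_id).mul (cont_exp c))
    have e2 : IntegrableOn (fun y => ⟪d, y⟫ * Real.exp ⟪c₀, y⟫) Ωs :=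
      integrableOn_cont hΩb ((continuous_const.inner continuous_id).mul (cont_exp c₀))
    have : ∀ y : EuclideanSpace ℝ (Fin n),
        h y = ⟪d, y⟫ * Real.exp ⟪c, y⟫ - ⟪d, y⟫ * Real.exp ⟪c₀, y⟫ := by
      intro y
      rw [hhdef]
      ring
    simp_rw [this]
    rw [integral_sub e1 e2, h1, h2, sub_zero]
  have hsign : ∀ y : EuclideanSpace ℝ (Fin n), ⟪d, y⟫ ≠ 0 → 0 < h y := by
    intro y hy
    have hips : ⟪c, y⟫ = ⟪c₀, y⟫ + ⟪d, y⟫ := by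
      rw [hddef, inner_sub_left]
      ring
    rw [hhdef]
    dsimp only
    rw [hips]
    rcases lt_or_gt_of_ne hy with hg | hg
    · have hex : Real.exp (⟪c₀, y⟫ + ⟪d, y⟫) < Real.exp ⟪c₀, y⟫ :=
        Real.exp_lt_exp.2 (by linarith)
      exact mul_pos_of_neg_of_neg hg (by linarith)
    · have hex : Real.exp ⟪c₀, y⟫ < Real.exp (⟪c₀, y⟫ + ⟪d, y⟫) :=
        Real.exp_lt_exp.2 (by linarith)
      exact mul_pos hg (by linarith)
  have hnn : ∀ y, 0 ≤ h y := by
    intro y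
    rcases eq_or_ne ⟪d, y⟫ 0 with hy | hy
    · rw [hhdef]
      dsimp only
      rw [hy, zero_mul]
    · exact (hsign y hy).le
  have hz : ∀ᵐ y ∂(volume.restrict Ωs), h y = 0 :=
    (integral_eq_zero_iff_of_nonneg_ae (Filter.Eventually.of_forall hnn) hint).1 hip
  set U : Set (EuclideanSpace ℝ (Fin n)) := Ωs ∩ {y | ⟪d, y⟫ ≠ 0} with hUdef
  have hUopen : IsOpen U :=
    hΩo.inter (isOpen_compl_singleton.preimage (continuous_const.inner continuous_id))
  have hUne : U.Nonempty := by
    obtain ⟨δ, hδ, hδball⟩ := Metric.isOpen_iff.1 hΩo 0 h0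
    have hdn : 0 < ‖d‖ := norm_pos_iff.2 hd
    refine ⟨(δ / (2 * ‖d‖)) • d, ?_, ?_⟩
    · apply hδball
      rw [Metric.mem_ball, dist_zero_right, norm_smul, Real.norm_eq_abs,
        abs_of_pos (by positivity : (0:ℝ) < δ / (2 * ‖d‖))]
      have heq : δ / (2 * ‖d‖) * ‖d‖ = δ / 2 := by
        field_simp
      rw [heq]
      linarith
    · show ⟪d, (δ / (2 * ‖d‖)) • d⟫ ≠ 0
      rw [real_inner_smul_right, real_inner_self_eq_norm_mul_norm]
      exact ne_of_gt (mul_pos (div_pos hδ (by linarith)) (mul_pos hdn hdn))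
  have hUnull : volume U = 0 := by
    have hsubN : U ⊆ {y | h y ≠ 0} := fun y hy => (hsign y hy.2).ne'
    have hres : volume.restrict Ωs U = 0 := measure_mono_null hsubN (ae_iff.1 hz)
    rw [Measure.restrict_apply hUopen.measurableSet,
      Set.inter_eq_self_of_subset_left Set.inter_subset_left] at hres
    exact hres
  exact absurd hUnull (hUopen.measure_pos volume hUne).ne'
end
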